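/- Let (y₁,y₂) : [0,T) → (0,∞)² be a differentiable solution of the ODE system with y₁(0), y₂(0) > 0. Assume a₁ = 0, a₂ = 0, and that h₁(t)/h₂(t) ≡ c̃ for a constant c̃ > 0, and suppose that y₁(t) ≥ y₁(0)·(y₂(t)/y₂(0))^{c̃} for all t ∈ [0,T). Set γ = p₁₁ + p₁₂/c̃ and F(t) = (y₂(0)/y₁(0)^{1/c̃})^{p₁₂}·∫₀ᵗ h₁(s) ds. Then for every t ∈ [0,T): ∫_{y₁(0)}^{y₁(t)} s^{−γ} ds ≤ F(t). Consequently, if γ ≤ 1, or if γ > 1 and F(t) ≤ y₁(0)^{1−γ}/(γ−1) for all t ≥ 0, then for every finite S > 0 one has sup{ y₁(t) : t ∈ [0,T), t ≤ S } < ∞ (the first component does not blow up in finite time). -/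

import Mathlib

open MeasureTheory Set

/-- Theorem 1.3(c.2) of the paper. With `a₁ = p₂₁-p₁₁+1 = 0`,
`a₂ = p₁₂-p₂₂+1 = 0`, `h₁/h₂ ≡ c̃ > 0`, the lower bound
`y₁ ≥ y₁(0)(y₂/y₂(0))^{c̃}` on `[0,T)`, `γ = p₁₁ + p₁₂/c̃` and
`F(t) = (y₂(0)/y₁(0)^{1/c̃})^{p₁₂} ∫₀ᵗ h₁(s) ds`, one has
`∫_{y₁(0)}^{y₁(t)} s^{-γ} ds ≤ F(t)` on `[0,T)`; consequently, if `γ ≤ 1`, or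
`γ > 1` and `F(t) ≤ y₁(0)^{1-γ}/(γ-1)` for all `t ≥ 0`, then `y₁` is bounded on
`[0,T) ∩ [0,S]` for every finite `S > 0`. -/
theorem statement18 (p11 p12 p21 p22 : ℝ)
    (hp11 : 0 ≤ p11) (hp12 : 0 ≤ p12) (hp21 : 0 ≤ p21) (hp22 : 0 ≤ p22)
    (h1 h2 : ℝ → ℝ)
    (hh1c : ContinuousOn h1 (Set.Ici 0)) (hh2c : ContinuousOn h2 (Set.Ici 0))
    (hh1p : ∀ t : ℝ, 0 ≤ t → 0 < h1 t) (hh2p : ∀ t : ℝ, 0 ≤ t → 0 < h2 t)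
    (ct : ℝ) (hct : 0 < ct) (hconst : ∀ t : ℝ, 0 ≤ t → h1 t / h2 t = ct)
    (T : ℝ) (hT : 0 < T)
    (y1 y2 : ℝ → ℝ)
    (hy1pos : ∀ t ∈ Set.Ico (0:ℝ) T, 0 < y1 t)
    (hy2pos : ∀ t ∈ Set.Ico (0:ℝ) T, 0 < y2 t)
    (hy1d : ∀ t ∈ Set.Ico (0:ℝ) T,
      HasDerivWithinAt y1 (h1 t * y1 t ^ p11 * y2 t ^ p12) (Set.Ico 0 T) t)
    (hy2d : ∀ t ∈ Set.Ico (0:ℝ) T,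
      HasDerivWithinAt y2 (h2 t * y2 t ^ p22 * y1 t ^ p21) (Set.Ico 0 T) t)
    (ha1 : p21 - p11 + 1 = 0) (ha2 : p12 - p22 + 1 = 0)
    (hbound : ∀ t ∈ Set.Ico (0:ℝ) T,
      y1 0 * (y2 t / y2 0) ^ ct ≤ y1 t) :
    (∀ t ∈ Set.Ico (0:ℝ) T,
      (∫ s in (y1 0)..(y1 t), s ^ (-(p11 + p12 / ct))) ≤
        (y2 0 / y1 0 ^ (1 / ct)) ^ p12 * ∫ s in (0:ℝ)..t, h1 s) ∧
    (((p11 + p12 / ct) ≤ 1 ∨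
        (1 < p11 + p12 / ct ∧
          ∀ t : ℝ, 0 ≤ t →
            (y2 0 / y1 0 ^ (1 / ct)) ^ p12 * (∫ s in (0:ℝ)..t, h1 s) ≤
              y1 0 ^ (1 - (p11 + p12 / ct)) / ((p11 + p12 / ct) - 1))) →
      ∀ S : ℝ, 0 < S → ∃ C : ℝ, ∀ t ∈ Set.Ico (0:ℝ) T, t ≤ S → y1 t ≤ C) := by
  have hmem0 : (0:ℝ) ∈ Set.Ico (0:ℝ) T := ⟨le_refl 0, hT⟩
  have hA : 0 < y1 0 := hy1pos 0 hmem0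
  have hB2 : 0 < y2 0 := hy2pos 0 hmem0
  set γ : ℝ := p11 + p12 / ct with hγdef
  set K : ℝ := (y2 0 / y1 0 ^ (1 / ct)) ^ p12 with hKdef
  have hKpos : 0 < K :=
    Real.rpow_pos_of_pos (div_pos hB2 (Real.rpow_pos_of_pos hA _)) _
  -- integrability and FTC facts for the power function
  have hf_cont : ContinuousOn (fun s : ℝ => s ^ (-γ)) (Set.Ioi 0) := fun s hs =>
    (Real.continuousAt_rpow_const s (-γ) (Or.inl (ne_of_gt hs))).continuousWithinAt
  have hg : ∀ x : ℝ, 0 < x →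
      HasDerivAt (fun u => ∫ s in (y1 0)..u, s ^ (-γ)) (x ^ (-γ)) x := by
    intro x hx
    have hint : IntervalIntegrable (fun s : ℝ => s ^ (-γ)) volume (y1 0) x :=
      (hf_cont.mono (fun s hs => lt_of_lt_of_le (lt_min hA hx) hs.1)).intervalIntegrable
    exact intervalIntegral.integral_hasDerivAt_right hint
      (hf_cont.stronglyMeasurableAtFilter isOpen_Ioi x hx)
      (Real.continuousAt_rpow_const x (-γ) (Or.inl (ne_of_gt hx)))
  have hh1int : ∀ u v : ℝ, 0 ≤ u → 0 ≤ v → IntervalIntegrable h1 volume u v := fun u v hu hv =>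
    (hh1c.mono (fun s hs => le_trans (le_min hu hv) hs.1)).intervalIntegrable
  have hintmono : ∀ u v : ℝ, 0 ≤ u → u ≤ v →
      (∫ s in (0:ℝ)..u, h1 s) ≤ ∫ s in (0:ℝ)..v, h1 s := by
    intro u v hu huv
    have h01 := hh1int 0 u le_rfl hu
    have h02 := hh1int u v hu (le_trans hu huv)
    have hnn : 0 ≤ ∫ s in u..v, h1 s :=
      intervalIntegral.integral_nonneg huv (fun x hx => (hh1p x (le_trans hu hx.1)).le)
    have := intervalIntegral.integral_add_adjacent_intervals h01 h02
    linarith [this]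
  -- the pointwise differential inequality
  have hstep : ∀ t ∈ Set.Ico (0:ℝ) T,
      y1 t ^ (-γ) * (h1 t * y1 t ^ p11 * y2 t ^ p12) ≤ K * h1 t := by
    intro t ht
    have hx : 0 < y1 t := hy1pos t ht
    have hz : 0 < y2 t := hy2pos t ht
    have h1' : (y2 t / y2 0) ^ ct ≤ y1 t / y1 0 :=
      (le_div_iff₀' hA).mpr (hbound t ht)
    have h2' : y2 t / y2 0 ≤ (y1 t / y1 0) ^ (1 / ct) := by
      have := Real.rpow_le_rpow (by positivity) h1' (le_of_lt (one_div_pos.mpr hct))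
      rwa [← Real.rpow_mul (by positivity), mul_one_div, div_self (ne_of_gt hct),
        Real.rpow_one] at this
    have h3' : y2 t ≤ y2 0 * (y1 t / y1 0) ^ (1 / ct) := (div_le_iff₀' hB2).mp h2'
    have h4' : y2 t ^ p12 ≤ K * y1 t ^ (p12 / ct) := by
      have := Real.rpow_le_rpow hz.le h3' hp12
      calc y2 t ^ p12 ≤ (y2 0 * (y1 t / y1 0) ^ (1 / ct)) ^ p12 := this
        _ = K * y1 t ^ (p12 / ct) := by
          rw [Real.mul_rpow hB2.le (by positivity), ← Real.rpow_mul (by positivity),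
            hKdef, Real.div_rpow hB2.le (by positivity), ← Real.rpow_mul hA.le,
            Real.div_rpow hx.le hA.le,
            show 1 / ct * p12 = p12 / ct from by ring]
          ring
    calc y1 t ^ (-γ) * (h1 t * y1 t ^ p11 * y2 t ^ p12)
        ≤ y1 t ^ (-γ) * (h1 t * y1 t ^ p11 * (K * y1 t ^ (p12 / ct))) := by
          apply mul_le_mul_of_nonneg_left
            (mul_le_mul_of_nonneg_left h4'
              (mul_nonneg (hh1p t ht.1).le (by positivity))) (by positivity)
      _ = K * h1 t * (y1 t ^ (-γ) * y1 t ^ p11 * y1 t ^ (p12 / ct)) := by ring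
      _ = K * h1 t := by
          rw [← Real.rpow_add hx, ← Real.rpow_add hx,
            show -γ + p11 + p12 / ct = 0 from by rw [hγdef]; ring, Real.rpow_zero, mul_one]
  -- the antitone auxiliary function
  set φ : ℝ → ℝ :=
    fun t => (∫ s in (y1 0)..(y1 t), s ^ (-γ)) - K * ∫ s in (0:ℝ)..t, h1 s with hφdef
  have hder : ∀ t ∈ Set.Ioo (0:ℝ) T,
      HasDerivAt φ (y1 t ^ (-γ) * (h1 t * y1 t ^ p11 * y2 t ^ p12) - K * h1 t) t := by
    intro t ht
    have htmem : t ∈ Set.Ico (0:ℝ) T := ⟨ht.1.le, ht.2⟩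
    have hnhds : Set.Ico (0:ℝ) T ∈ nhds t :=
      Filter.mem_of_superset (isOpen_Ioo.mem_nhds ht) Ioo_subset_Ico_self
    have hd1 : HasDerivAt y1 (h1 t * y1 t ^ p11 * y2 t ^ p12) t :=
      (hy1d t htmem).hasDerivAt hnhds
    have hcomp : HasDerivAt (fun u => ∫ s in (y1 0)..(y1 u), s ^ (-γ))
        (y1 t ^ (-γ) * (h1 t * y1 t ^ p11 * y2 t ^ p12)) t :=
      (hg (y1 t) (hy1pos t htmem)).comp t hd1
    have hH : HasDerivAt (fun u => ∫ s in (0:ℝ)..u, h1 s) (h1 t) t :=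
      intervalIntegral.integral_hasDerivAt_right (hh1int 0 t le_rfl ht.1.le)
        ⟨Set.Ici 0, Ici_mem_nhds ht.1, hh1c.aestronglyMeasurable measurableSet_Ici⟩
        (hh1c.continuousAt (Ici_mem_nhds ht.1))
    exact hcomp.sub (hH.const_mul K)
  have hφant : AntitoneOn φ (Set.Ico (0:ℝ) T) := by
    apply antitoneOn_of_deriv_nonpos (convex_Ico 0 T)
    · apply ContinuousOn.sub
      · intro t ht
        exact ((hg (y1 t) (hy1pos t ht)).continuousAt).comp_continuousWithinAt
          ((hy1d t ht).continuousWithinAt)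
      · apply ContinuousOn.mul continuousOn_const
        have : IntegrableOn h1 (Set.uIcc 0 T) := by
          rw [uIcc_of_le hT.le]
          exact (hh1c.mono (fun s hs => hs.1)).integrableOn_Icc
        exact (intervalIntegral.continuousOn_primitive_interval this).mono
          (fun s hs => by rw [uIcc_of_le hT.le]; exact ⟨hs.1, hs.2.le⟩)
    · intro t ht
      rw [interior_Ico] at ht
      exact ((hder t ht).differentiableAt).differentiableWithinAt
    · intro t ht
      rw [interior_Ico] at ht
      rw [(hder t ht).deriv]
      have := hstep t ⟨ht.1.le, ht.2⟩
      linarith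
  have hφ0 : φ 0 = 0 := by
    simp [hφdef, intervalIntegral.integral_same]
  have part1 : ∀ t ∈ Set.Ico (0:ℝ) T,
      (∫ s in (y1 0)..(y1 t), s ^ (-γ)) ≤ K * ∫ s in (0:ℝ)..t, h1 s := by
    intro t ht
    have := hφant hmem0 ht ht.1
    rw [hφ0] at this
    have h : φ t = (∫ s in (y1 0)..(y1 t), s ^ (-γ)) - K * ∫ s in (0:ℝ)..t, h1 s := rfl
    linarith [h ▸ this]
  refine ⟨part1, ?_⟩
  intro hcase S hS
  -- explicit values of the integral
  have hval : ∀ t ∈ Set.Ico (0:ℝ) T, γ ≠ 1 →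
      (∫ s in (y1 0)..(y1 t), s ^ (-γ)) =
        ((y1 t) ^ (1 - γ) - (y1 0) ^ (1 - γ)) / (1 - γ) := by
    intro t ht hne
    have h0 : (0:ℝ) ∉ Set.uIcc (y1 0) (y1 t) :=
      notMem_uIcc_of_lt hA (hy1pos t ht)
    rw [integral_rpow (Or.inr ⟨by
        intro h; apply hne; have := neg_injective h; linarith, h0⟩)]
    rw [show -γ + 1 = 1 - γ from by ring]
  rcases hcase with hle | ⟨hgt, hF⟩
  · by_cases heq : γ = 1
    · -- logarithmic case
      refine ⟨y1 0 * Real.exp (K * ∫ s in (0:ℝ)..S, h1 s), ?_⟩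
      intro t ht htS
      have h1t := part1 t ht
      have hx : 0 < y1 t := hy1pos t ht
      have hlog : (∫ s in (y1 0)..(y1 t), s ^ (-γ)) = Real.log (y1 t / y1 0) := by
        rw [show (-γ) = -1 from by rw [heq]]
        simp_rw [Real.rpow_neg_one]
        exact integral_inv (notMem_uIcc_of_lt hA hx)
      have hmono : K * (∫ s in (0:ℝ)..t, h1 s) ≤ K * ∫ s in (0:ℝ)..S, h1 s :=
        mul_le_mul_of_nonneg_left (hintmono t S ht.1 htS) hKpos.le
      have : Real.log (y1 t / y1 0) ≤ K * ∫ s in (0:ℝ)..S, h1 s := by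
        rw [← hlog]; linarith
      have := (Real.log_le_iff_le_exp (by positivity)).mp this
      rw [div_le_iff₀ hA] at this
      linarith [this]
    · have hlt : γ < 1 := lt_of_le_of_ne hle heq
      set B : ℝ := K * ∫ s in (0:ℝ)..S, h1 s with hBdef
      refine ⟨((y1 0) ^ (1 - γ) + (1 - γ) * B) ^ (1 - γ)⁻¹, ?_⟩
      intro t ht htS
      have hx : 0 < y1 t := hy1pos t ht
      have h1t := part1 t ht
      rw [hval t ht heq] at h1t
      have hmono : K * (∫ s in (0:ℝ)..t, h1 s) ≤ B :=
        mul_le_mul_of_nonneg_left (hintmono t S ht.1 htS) hKpos.le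
      have hsub : 0 < 1 - γ := by linarith
      have hM : (y1 t) ^ (1 - γ) ≤ (y1 0) ^ (1 - γ) + (1 - γ) * B := by
        rw [div_le_iff₀ hsub] at h1t
        nlinarith
      have hMpos : (0:ℝ) ≤ (y1 0) ^ (1 - γ) + (1 - γ) * B :=
        le_trans (Real.rpow_nonneg hx.le _) hM
      exact (Real.le_rpow_inv_iff_of_pos hx.le hMpos hsub).mpr hM
  · -- supercritical case
    have hsub : 1 - γ < 0 := by linarith
    set B : ℝ := K * ∫ s in (0:ℝ)..T, h1 s with hBdef
    have hTB : B < y1 0 ^ (1 - γ) / (γ - 1) := by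
      have h2 := hF (T + 1) (by linarith)
      have hsplit := intervalIntegral.integral_add_adjacent_intervals
        (hh1int 0 T le_rfl hT.le) (hh1int T (T + 1) hT.le (by linarith))
      have hpos : 0 < ∫ s in T..(T + 1), h1 s :=
        intervalIntegral.intervalIntegral_pos_of_pos_on
          (hh1int T (T + 1) hT.le (by linarith))
          (fun x hx => hh1p x (le_trans hT.le hx.1.le)) (by linarith)
      have : B < K * ∫ s in (0:ℝ)..(T + 1), h1 s := by
        rw [hBdef, ← hsplit]
        nlinarith
      linarith
    have hγ1 : 0 < γ - 1 := by linarith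
    set m : ℝ := (y1 0) ^ (1 - γ) - (γ - 1) * B with hmdef
    have hm : 0 < m := by
      rw [hmdef]
      nlinarith [(lt_div_iff₀ hγ1).mp hTB]
    refine ⟨m ^ (1 - γ)⁻¹, ?_⟩
    intro t ht htS
    have hx : 0 < y1 t := hy1pos t ht
    have h1t := part1 t ht
    rw [hval t ht (by linarith)] at h1t
    have hmono : K * (∫ s in (0:ℝ)..t, h1 s) ≤ B :=
      mul_le_mul_of_nonneg_left (hintmono t T ht.1 ht.2.le) hKpos.le
    have hge : m ≤ (y1 t) ^ (1 - γ) := by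
      rw [div_le_iff_of_neg hsub] at h1t
      nlinarith
    exact (Real.le_rpow_inv_iff_of_neg hx hm hsub).mpr hge
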